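/- In a braided multiplicity-free semi-simple tensor system over a commutative ring R, let λ, ν ∈ I be such that ν acts one-dimensionally on λ, and suppose d, g ∈ R are units with d^{-1} = Σ_{υ∈I} (F^{λλλ}_{φ_ν(λ)})^υ_ν R^{λλ}_υ (F̄^{λλλ}_{φ_ν(λ)})^ν_υ and g^{-2} = R^{λλ}_ν. Define U_i = d p_i^{(ν)} and G_i = g R_i on H_{λ̃} with λ̃ = (λ,…,λ). If m ∈ R satisfies g R^{λλ}_υ − g^{-1} R̄^{λλ}_υ = m for every υ ∈ I with N_{λλ}^υ = 1 and υ ≠ ν, and g^{-1} − g = m(1 − d), then the remaining Birman–Murakami–Wenzl relation holds: G_i − G_i^{-1} = m(Id − U_i) for all 1 ≤ i ≤ L−1, where G_i^{-1} = g^{-1} Σ_{μ∈I} R̄^{λλ}_μ p_i^{(μ)}. -/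

import Mathlib

open scoped Classical

open Fin.NatCast

noncomputable section

/-- A multiplicity-free semi-simple tensor system over a commutative ring `R`,
with index set `I`, fusion constants `N`, and F-moves `F`, `Fbar`.
`F a b c d e f` denotes `(F^{abc}_d)^e_f` and `Fbar a b c d f e` denotes `(F̄^{abc}_d)^f_e`. -/
structure TensorSystem (R : Type*) [CommRing R] (I : Type*) where
  N : I → I → I → ℕ
  F : I → I → I → I → I → I → R
  Fbar : I → I → I → I → I → I → R
  N_le_one : ∀ a b c, N a b c ≤ 1
  N_assoc : ∀ a b c d, (∑ᶠ e, N a b e * N e c d) = ∑ᶠ e, N a e d * N b c e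
  N_finite : ∀ a b, (Function.support fun c => N a b c).Finite
  F_vanish : ∀ a b c d e f, N a b e * N b c f * N a f d * N e c d = 0 → F a b c d e f = 0
  Fbar_vanish : ∀ a b c d e f, N a b e * N b c f * N a f d * N e c d = 0 → Fbar a b c d f e = 0
  pentagon : ∀ a b c d e f g k l,
      (∑ᶠ h, F a b c g f h * F a h d e g k * F b c d k h l) = F f c d e g l * F a b l e f k
  F_Fbar : ∀ a b c d e e',
      (∑ᶠ f, F a b c d e f * Fbar a b c d f e')
        = (if e = e' then (1 : R) else 0) * (N a b e : R) * (N e c d : R)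
  Fbar_F : ∀ a b c d f f',
      (∑ᶠ e, Fbar a b c d f' e * F a b c d e f)
        = (if f = f' then (1 : R) else 0) * (N b c f : R) * (N a f d : R)

namespace TensorSystem

variable {R : Type*} [CommRing R] {I : Type*}

/-- `μ = (μ₀, μ₁, …, μ_L)` is a fusion path for the tuple `λ̃ = (lam 1, …, lam L)`:
`μ₀ ∈ I0` and `N_{μ_{i-1} λ_i}^{μ_i} = 1` for `1 ≤ i ≤ L`. -/
def IsPath (TS : TensorSystem R I) (L : ℕ) (I0 : Set I) (lam : ℕ → I)
    (μ : Fin (L + 1) → I) : Prop :=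
  μ 0 ∈ I0 ∧ ∀ i : ℕ, 1 ≤ i → i ≤ L →
    TS.N (μ ((i - 1 : ℕ) : Fin (L + 1))) (lam i) (μ ((i : ℕ) : Fin (L + 1))) = 1

/-- Matrix element `⟨μ'| p_i^{(ν)} |μ⟩` of the two-site projection operator. -/
def pMat (TS : TensorSystem R I) (L : ℕ) (lam : ℕ → I) (i : ℕ) (ν : I)
    (μ' μ : Fin (L + 1) → I) : R :=
  (∏ j ∈ Finset.univ.erase ((i : ℕ) : Fin (L + 1)), if μ j = μ' j then (1 : R) else 0)
    * TS.Fbar (μ ((i - 1 : ℕ) : Fin (L + 1))) (lam i) (lam (i + 1))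
        (μ ((i + 1 : ℕ) : Fin (L + 1))) ν (μ' ((i : ℕ) : Fin (L + 1)))
    * TS.F (μ ((i - 1 : ℕ) : Fin (L + 1))) (lam i) (lam (i + 1))
        (μ ((i + 1 : ℕ) : Fin (L + 1))) (μ ((i : ℕ) : Fin (L + 1))) ν

/-- Matrix elements of the composition of two operators on `H_{λ̃}`,
summing over the fusion-path basis. -/
def mulMat (TS : TensorSystem R I) (L : ℕ) (I0 : Set I) (lam : ℕ → I)
    (A B : (Fin (L + 1) → I) → (Fin (L + 1) → I) → R)
    (μ' μ : Fin (L + 1) → I) : R :=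
  ∑ᶠ μ'' ∈ {x : Fin (L + 1) → I | TS.IsPath L I0 lam x}, A μ' μ'' * B μ'' μ

/-- Two operators on `H_{λ̃}` are equal iff all their matrix elements between
fusion-path basis vectors agree. -/
def MatEqOn (TS : TensorSystem R I) (L : ℕ) (I0 : Set I) (lam : ℕ → I)
    (A B : (Fin (L + 1) → I) → (Fin (L + 1) → I) → R) : Prop :=
  ∀ μ' μ : Fin (L + 1) → I, TS.IsPath L I0 lam μ' → TS.IsPath L I0 lam μ → A μ' μ = B μ' μ

/-- Extended fusion numbers `N_{a a₁ ⋯ aₙ}^b` along a list `[a₁, …, aₙ]`. -/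
def Nseq (TS : TensorSystem R I) : I → List I → I → ℕ
  | a, [], b => if a = b then 1 else 0
  | a, c :: rest, b => ∑ᶠ x, TS.N a c x * Nseq TS x rest b

/-- `ν` acts one-dimensionally on the left of `μ`. -/
def ActsOneDimLeft (TS : TensorSystem R I) (ν μ : I) : Prop :=
  (∑ᶠ μ' : I, TS.N ν μ μ') = 1

/-- `ν` acts one-dimensionally on the right of `μ`. -/
def ActsOneDimRight (TS : TensorSystem R I) (ν μ : I) : Prop :=
  (∑ᶠ μ' : I, TS.N μ ν μ') = 1

end TensorSystem

/-- Matrix elements of the identity operator. -/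
def deltaMat {R : Type*} [CommRing R] {I : Type*} (L : ℕ)
    (μ' μ : Fin (L + 1) → I) : R :=
  ∏ j : Fin (L + 1), if μ j = μ' j then (1 : R) else 0

/-- Scalar multiple of a matrix of operator matrix elements. -/
def smulMat {R : Type*} [CommRing R] {α : Sort*} (c : R) (A : α → α → R) : α → α → R :=
  fun x y => c * A x y

/-- A braided multiplicity-free semi-simple tensor system: additionally `N` is
symmetric and there are braiding constants `Rm a b c = R^{ab}_c`,
`Rbarm a b c = R̄^{ab}_c` satisfying the hexagon relations. -/
structure BraidedTensorSystem (R : Type*) [CommRing R] (I : Type*) extends TensorSystem R I where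
  N_symm : ∀ a b c, N a b c = N b a c
  Rm : I → I → I → R
  Rbarm : I → I → I → R
  Rm_vanish : ∀ a b c, N a b c = 0 → Rm a b c = 0
  Rbarm_vanish : ∀ a b c, N a b c = 0 → Rbarm a b c = 0
  hexagonR : ∀ a b c d e g,
      Rm a c e * F a c b d e g * Rm b c g
        = ∑ᶠ f, F c a b d e f * Rm f c d * F a b c d f g
  hexagonRbar : ∀ a b c d e g,
      Rbarm a c e * F a c b d e g * Rbarm b c g
        = ∑ᶠ f, F c a b d e f * Rbarm f c d * F a b c d f g
  Rm_Rbarm : ∀ a b c, Rm a b c * Rbarm b a c = (N a b c : R)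

namespace BraidedTensorSystem

variable {R : Type*} [CommRing R] {I : Type*}

/-- Matrix elements of the braiding operator `R_i = Σ_m R^{λλ}_m p_i^{(m)}`
on a homogeneous chain `λ̃ = (lam0, …, lam0)`. -/
def Rmat (BTS : BraidedTensorSystem R I) (L : ℕ) (lam0 : I) (i : ℕ)
    (μ' μ : Fin (L + 1) → I) : R :=
  ∑ᶠ m : I, BTS.Rm lam0 lam0 m * BTS.toTensorSystem.pMat L (fun _ => lam0) i m μ' μ

/-- Matrix elements of the inverse braiding operator
`R_i⁻¹ = Σ_m R̄^{λλ}_m p_i^{(m)}`. -/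
def RbarMat (BTS : BraidedTensorSystem R I) (L : ℕ) (lam0 : I) (i : ℕ)
    (μ' μ : Fin (L + 1) → I) : R :=
  ∑ᶠ m : I, BTS.Rbarm lam0 lam0 m * BTS.toTensorSystem.pMat L (fun _ => lam0) i m μ' μ

end BraidedTensorSystem

lemma skein_aux {R : Type*} [CommRing R] {I : Type*} (p Rm Rbarm : I → R) (N : I → ℕ)
    (g d : Rˣ) (m : R) (ν : I) (Δ : R)
    (hN1 : ∀ x, N x ≤ 1)
    (hfinN : (Function.support N).Finite)
    (hpz : ∀ x, N x = 0 → p x = 0)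
    (hRz : ∀ x, N x = 0 → Rm x = 0)
    (hg : ((g⁻¹ : Rˣ) : R) ^ 2 = Rm ν)
    (hRR : Rm ν * Rbarm ν = (N ν : R))
    (hm1 : ∀ x, N x = 1 → x ≠ ν → (g : R) * Rm x - ((g⁻¹ : Rˣ) : R) * Rbarm x = m)
    (hm2 : ((g⁻¹ : Rˣ) : R) - (g : R) = m * (1 - (d : R)))
    (hcomp : (∑ᶠ x, p x) = Δ) :
    (g : R) * (∑ᶠ x, Rm x * p x) - ((g⁻¹ : Rˣ) : R) * (∑ᶠ x, Rbarm x * p x)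
      = m * (Δ - (d : R) * p ν) := by
  by_cases h10 : (1 : R) = 0
  · haveI : Subsingleton R := subsingleton_of_zero_eq_one h10.symm
    exact Subsingleton.elim _ _
  have hinv1 : (g : R) * ((g⁻¹ : Rˣ) : R) = 1 := Units.mul_inv g
  have hNν : N ν = 1 := by
    by_contra h
    have h0 : N ν = 0 := by have := hN1 ν; omega
    apply h10
    calc (1 : R) = ((g : R) * ((g⁻¹ : Rˣ) : R)) ^ 2 := by rw [hinv1]; ring
      _ = (g : R) ^ 2 * ((g⁻¹ : Rˣ) : R) ^ 2 := by ring
      _ = 0 := by rw [hg, hRz ν h0]; ring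
  have hfinp : (Function.support p).Finite := hfinN.subset (by
    intro x hx
    simp only [Function.mem_support] at hx ⊢
    intro h; exact hx (hpz x h))
  have hfinRp : (Function.support fun x => Rm x * p x).Finite := hfinp.subset (by
    intro x hx
    simp only [Function.mem_support] at hx ⊢
    intro h; exact hx (by rw [h, mul_zero]))
  have hfinRbp : (Function.support fun x => Rbarm x * p x).Finite := hfinp.subset (by
    intro x hx
    simp only [Function.mem_support] at hx ⊢
    intro h; exact hx (by rw [h, mul_zero]))
  have hfin1 : (Function.support fun x => (g : R) * (Rm x * p x)).Finite := hfinRp.subset (by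
    intro x hx
    simp only [Function.mem_support] at hx ⊢
    intro h; exact hx (by rw [h, mul_zero]))
  have hfin2 : (Function.support fun x => ((g⁻¹ : Rˣ) : R) * (Rbarm x * p x)).Finite :=
    hfinRbp.subset (by
      intro x hx
      simp only [Function.mem_support] at hx ⊢
      intro h; exact hx (by rw [h, mul_zero]))
  have hfinm : (Function.support fun x => m * p x).Finite := hfinp.subset (by
    intro x hx
    simp only [Function.mem_support] at hx ⊢
    intro h; exact hx (by rw [h, mul_zero]))
  have hfinif : (Function.support fun x => if x = ν then m * (d : R) * p ν else 0).Finite :=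
    (Set.finite_singleton ν).subset (by
      intro x hx
      simp only [Function.mem_support] at hx
      by_contra hxν
      exact hx (if_neg (by simpa using hxν)))
  have e1 : (g : R) * Rm ν = ((g⁻¹ : Rˣ) : R) := by
    rw [← hg]
    calc (g : R) * ((g⁻¹ : Rˣ) : R) ^ 2
        = ((g : R) * ((g⁻¹ : Rˣ) : R)) * ((g⁻¹ : Rˣ) : R) := by ring
      _ = ((g⁻¹ : Rˣ) : R) := by rw [hinv1, one_mul]
  have e2 : ((g⁻¹ : Rˣ) : R) * Rbarm ν = (g : R) := by
    have h2 : ((g⁻¹ : Rˣ) : R) ^ 2 * Rbarm ν = 1 := by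
      rw [hg, hRR, hNν]; norm_num
    calc ((g⁻¹ : Rˣ) : R) * Rbarm ν
        = ((g : R) * ((g⁻¹ : Rˣ) : R)) * (((g⁻¹ : Rˣ) : R) * Rbarm ν) := by rw [hinv1, one_mul]
      _ = (g : R) * (((g⁻¹ : Rˣ) : R) ^ 2 * Rbarm ν) := by ring
      _ = (g : R) := by rw [h2, mul_one]
  have hpt : ∀ x, (g : R) * (Rm x * p x) - ((g⁻¹ : Rˣ) : R) * (Rbarm x * p x)
      = m * p x - (if x = ν then m * (d : R) * p ν else 0) := by
    intro x
    by_cases hxν : x = ν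
    · subst hxν
      rw [if_pos rfl]
      calc (g : R) * (Rm x * p x) - ((g⁻¹ : Rˣ) : R) * (Rbarm x * p x)
          = ((g : R) * Rm x) * p x - (((g⁻¹ : Rˣ) : R) * Rbarm x) * p x := by ring
        _ = (((g⁻¹ : Rˣ) : R) - (g : R)) * p x := by rw [e1, e2]; ring
        _ = (m * (1 - (d : R))) * p x := by rw [hm2]
        _ = m * p x - m * (d : R) * p x := by ring
    · rw [if_neg hxν, sub_zero]
      rcases Nat.le_one_iff_eq_zero_or_eq_one.mp (hN1 x) with h0 | h1
      · rw [hpz x h0]; ring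
      · calc (g : R) * (Rm x * p x) - ((g⁻¹ : Rˣ) : R) * (Rbarm x * p x)
            = ((g : R) * Rm x - ((g⁻¹ : Rˣ) : R) * Rbarm x) * p x := by ring
          _ = m * p x := by rw [hm1 x h1 hxν]
  calc (g : R) * (∑ᶠ x, Rm x * p x) - ((g⁻¹ : Rˣ) : R) * (∑ᶠ x, Rbarm x * p x)
      = (∑ᶠ x, (g : R) * (Rm x * p x)) - ∑ᶠ x, ((g⁻¹ : Rˣ) : R) * (Rbarm x * p x) := by
        rw [mul_finsum' _ _ hfinRp, mul_finsum' _ _ hfinRbp]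
    _ = ∑ᶠ x, ((g : R) * (Rm x * p x) - ((g⁻¹ : Rˣ) : R) * (Rbarm x * p x)) :=
        (finsum_sub_distrib hfin1 hfin2).symm
    _ = ∑ᶠ x, (m * p x - (if x = ν then m * (d : R) * p ν else 0)) := finsum_congr hpt
    _ = (∑ᶠ x, m * p x) - ∑ᶠ x, (if x = ν then m * (d : R) * p ν else 0) :=
        finsum_sub_distrib hfinm hfinif
    _ = m * Δ - m * (d : R) * p ν := by
        rw [← mul_finsum' _ _ hfinp, hcomp,
          finsum_eq_single _ ν (fun x hx => if_neg hx), if_pos rfl]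
    _ = m * (Δ - (d : R) * p ν) := by ring

/-- the remaining Birman–Murakami–Wenzl skein relation
`G_i − G_i⁻¹ = m (Id − U_i)` under the eigenvalue conditions on `m`. -/
theorem bmw_skein_relation
    {R : Type*} [CommRing R] {I : Type*}
    (BTS : BraidedTensorSystem R I) (lam0 ν : I)
    (hone : BTS.toTensorSystem.ActsOneDimLeft ν lam0)
    (φ : I) (hφ : BTS.N ν lam0 φ = 1)
    (d g : Rˣ)
    (hd : ((d⁻¹ : Rˣ) : R)
      = ∑ᶠ υ : I, BTS.F lam0 lam0 lam0 φ υ ν * BTS.Rm lam0 lam0 υ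
          * BTS.Fbar lam0 lam0 lam0 φ ν υ)
    (hg : ((g⁻¹ : Rˣ) : R) ^ 2 = BTS.Rm lam0 lam0 ν)
    (m : R)
    (hm1 : ∀ υ : I, BTS.N lam0 lam0 υ = 1 → υ ≠ ν →
      (g : R) * BTS.Rm lam0 lam0 υ - ((g⁻¹ : Rˣ) : R) * BTS.Rbarm lam0 lam0 υ = m)
    (hm2 : ((g⁻¹ : Rˣ) : R) - (g : R) = m * (1 - (d : R)))
    (L : ℕ) (I0 : Set I) (hI0 : I0.Finite) :
    ∀ i : ℕ, 1 ≤ i → i + 1 ≤ L →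
      BTS.toTensorSystem.MatEqOn L I0 (fun _ => lam0)
        (fun μ' μ => (g : R) * BTS.Rmat L lam0 i μ' μ
          - ((g⁻¹ : Rˣ) : R) * BTS.RbarMat L lam0 i μ' μ)
        (fun μ' μ => m * (deltaMat L μ' μ
          - (d : R) * BTS.toTensorSystem.pMat L (fun _ => lam0) i ν μ' μ)) := by
  intro i hi1 hiL μ' μ hμ' hμ
  have hNe' : BTS.N (μ ((i - 1 : ℕ) : Fin (L + 1))) lam0 (μ ((i : ℕ) : Fin (L + 1))) = 1 := by
    have h := hμ.2 i hi1 (by omega)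
    simpa using h
  have hNd' : BTS.N (μ ((i : ℕ) : Fin (L + 1))) lam0 (μ ((i + 1 : ℕ) : Fin (L + 1))) = 1 := by
    have h := hμ.2 (i + 1) (by omega) hiL
    simpa using h
  have hFfin : (Function.support fun x =>
      BTS.F (μ ((i - 1 : ℕ) : Fin (L + 1))) lam0 lam0 (μ ((i + 1 : ℕ) : Fin (L + 1)))
          (μ ((i : ℕ) : Fin (L + 1))) x
        * BTS.Fbar (μ ((i - 1 : ℕ) : Fin (L + 1))) lam0 lam0 (μ ((i + 1 : ℕ) : Fin (L + 1)))
          x (μ' ((i : ℕ) : Fin (L + 1)))).Finite := by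
    apply (BTS.N_finite lam0 lam0).subset
    intro x hx
    simp only [Function.mem_support] at hx ⊢
    intro h
    exact hx (by rw [BTS.F_vanish _ _ _ _ _ _ (by simp [h]), zero_mul])
  have hcomp : (∑ᶠ x, BTS.toTensorSystem.pMat L (fun _ => lam0) i x μ' μ)
      = deltaMat L μ' μ := by
    have step : ∀ x, BTS.toTensorSystem.pMat L (fun _ => lam0) i x μ' μ
        = (∏ j ∈ Finset.univ.erase ((i : ℕ) : Fin (L + 1)),
              if μ j = μ' j then (1 : R) else 0)
          * (BTS.F (μ ((i - 1 : ℕ) : Fin (L + 1))) lam0 lam0 (μ ((i + 1 : ℕ) : Fin (L + 1)))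
                (μ ((i : ℕ) : Fin (L + 1))) x
            * BTS.Fbar (μ ((i - 1 : ℕ) : Fin (L + 1))) lam0 lam0
                (μ ((i + 1 : ℕ) : Fin (L + 1))) x (μ' ((i : ℕ) : Fin (L + 1)))) := by
      intro x
      simp only [TensorSystem.pMat]
      ring
    rw [finsum_congr step, ← mul_finsum' _ _ hFfin, BTS.F_Fbar, hNe', hNd', deltaMat,
      ← Finset.mul_prod_erase Finset.univ _
        (Finset.mem_univ ((i : ℕ) : Fin (L + 1)))]
    push_cast
    ring
  show (g : R) * BTS.Rmat L lam0 i μ' μ - ((g⁻¹ : Rˣ) : R) * BTS.RbarMat L lam0 i μ' μ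
      = m * (deltaMat L μ' μ
          - (d : R) * BTS.toTensorSystem.pMat L (fun _ => lam0) i ν μ' μ)
  rw [BraidedTensorSystem.Rmat, BraidedTensorSystem.RbarMat]
  exact skein_aux (fun x => BTS.toTensorSystem.pMat L (fun _ => lam0) i x μ' μ)
    (fun x => BTS.Rm lam0 lam0 x) (fun x => BTS.Rbarm lam0 lam0 x)
    (fun x => BTS.N lam0 lam0 x) g d m ν _
    (fun x => BTS.N_le_one lam0 lam0 x) (BTS.N_finite lam0 lam0)
    (fun x hx => by
      have hFb : BTS.Fbar (μ ((i - 1 : ℕ) : Fin (L + 1))) lam0 lam0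
          (μ ((i + 1 : ℕ) : Fin (L + 1))) x (μ' ((i : ℕ) : Fin (L + 1))) = 0 :=
        BTS.Fbar_vanish _ _ _ _ _ _ (by simp [hx])
      simp only [TensorSystem.pMat, hFb, mul_zero, zero_mul])
    (fun x hx => BTS.Rm_vanish _ _ _ hx)
    hg (BTS.Rm_Rbarm lam0 lam0 ν) hm1 hm2 hcomp
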